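/- Greedy element bound via optimal set: let f be nonnegative monotone submodular, S* with |S*| ≤ k, and T any set. If an element m is chosen as argmax over a set Z with Pr(i ∈ Z) ≥ 1/k uniformly over i ∈ S* (given Z ≠ ∅, a random element of Z is each i ∈ S* with probability ≥ 1/k), then E[Δ(m | T) | Z ≠ ∅] ≥ (1/k)(f(S*) − f(T)). -/
import Mathlib

lemma submod_sum {U : Type*} [DecidableEq U] (f : Finset U → ℝ)
    (hmono : ∀ A B : Finset U, A ⊆ B → f A ≤ f B)
    (hsub : ∀ A B : Finset U, A ⊆ B → ∀ x ∉ B,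
      f (insert x A) - f A ≥ f (insert x B) - f B)
    (T : Finset U) :
    ∀ S : Finset U, f (S ∪ T) - f T ≤ ∑ i ∈ S, (f (insert i T) - f T) := by
  intro S
  induction S using Finset.induction_on with
  | empty => simp
  | @insert a S' h ih =>
    rw [Finset.sum_insert h, Finset.insert_union]
    by_cases ha : a ∈ S' ∪ T
    · rw [Finset.insert_eq_self.mpr ha]
      have : 0 ≤ f (insert a T) - f T := sub_nonneg.mpr (hmono _ _ (Finset.subset_insert a T))
      linarith
    · have := hsub T (S' ∪ T) Finset.subset_union_right a ha
      linarith

theorem greedy_element_bound {U : Type*} [Fintype U] [DecidableEq U]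
    {Ω : Type*} [Fintype Ω]
    (f : Finset U → ℝ)
    (hnonneg : ∀ A, 0 ≤ f A)
    (hmono : ∀ A B : Finset U, A ⊆ B → f A ≤ f B)
    (hsub : ∀ A B : Finset U, A ⊆ B → ∀ x ∉ B,
      f (insert x A) - f A ≥ f (insert x B) - f B)
    (k : ℕ) (hk : 0 < k)
    (Sstar T : Finset U) (hcard : Sstar.card ≤ k)
    (w : Ω → ℝ) (hw : ∀ ω, 0 ≤ w ω) (hw1 : ∑ ω, w ω = 1)
    (Z : Ω → Finset U) (hZ : ∀ ω, Z ω ⊆ Sstar)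
    (m ι : Ω → U)
    (hι : ∀ ω, (Z ω).Nonempty → ι ω ∈ Z ω)
    (hm : ∀ ω, ∀ x ∈ Z ω,
      f (insert (m ω) T) - f T ≥ f (insert x T) - f T)
    (hPrB : 0 < ∑ ω, if (Z ω).Nonempty then w ω else 0)
    (hunif : ∀ i ∈ Sstar,
      (∑ ω, if ι ω = i ∧ (Z ω).Nonempty then w ω else 0)
          / (∑ ω, if (Z ω).Nonempty then w ω else 0) ≥ 1/(k : ℝ)) :
    (∑ ω, if (Z ω).Nonempty then w ω * (f (insert (m ω) T) - f T) else 0)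
        / (∑ ω, if (Z ω).Nonempty then w ω else 0)
      ≥ (1/(k : ℝ)) * (f Sstar - f T) := by
  set P := ∑ ω, if (Z ω).Nonempty then w ω else 0 with hP
  rw [ge_iff_le, le_div_iff₀ hPrB]
  have hD : ∀ i : U, 0 ≤ f (insert i T) - f T := fun i =>
    sub_nonneg.mpr (hmono _ _ (Finset.subset_insert i T))
  have hq : ∀ i ∈ Sstar, (1/(k:ℝ)) * P ≤
      ∑ ω, if ι ω = i ∧ (Z ω).Nonempty then w ω else 0 := by
    intro i hi
    have h := hunif i hi
    rw [ge_iff_le, le_div_iff₀ hPrB] at h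
    linarith
  have key : ∑ i ∈ Sstar, (f (insert i T) - f T) * ((1/(k:ℝ)) * P)
      ≤ ∑ ω, if (Z ω).Nonempty then w ω * (f (insert (m ω) T) - f T) else 0 := by
    calc ∑ i ∈ Sstar, (f (insert i T) - f T) * ((1/(k:ℝ)) * P)
        ≤ ∑ i ∈ Sstar, (f (insert i T) - f T) *
            (∑ ω, if ι ω = i ∧ (Z ω).Nonempty then w ω else 0) := by
          apply Finset.sum_le_sum; intro i hi
          exact mul_le_mul_of_nonneg_left (hq i hi) (hD i)
      _ = ∑ ω, ∑ i ∈ Sstar, (f (insert i T) - f T) *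
            (if ι ω = i ∧ (Z ω).Nonempty then w ω else 0) := by
          rw [Finset.sum_comm]
          exact Finset.sum_congr rfl fun i _ => Finset.mul_sum _ _ _
      _ ≤ ∑ ω, if (Z ω).Nonempty then w ω * (f (insert (m ω) T) - f T) else 0 := by
          apply Finset.sum_le_sum; intro ω _
          by_cases hne : (Z ω).Nonempty
          · have hιZ := hι ω hne
            have hιS : ι ω ∈ Sstar := hZ ω hιZ
            rw [if_pos hne]
            have heq : ∑ i ∈ Sstar, (f (insert i T) - f T) *
                (if ι ω = i ∧ (Z ω).Nonempty then w ω else 0)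
                = (f (insert (ι ω) T) - f T) * w ω := by
              rw [Finset.sum_eq_single (ι ω)]
              · simp [hne]
              · intro b _ hbne
                rw [if_neg (fun h => hbne h.1.symm), mul_zero]
              · intro h; exact absurd hιS h
            rw [heq]
            have hmι := hm ω (ι ω) hιZ
            nlinarith [hw ω]
          · simp [hne]
  have hS := submod_sum f hmono hsub T Sstar
  have hmonoS : f Sstar ≤ f (Sstar ∪ T) := hmono _ _ Finset.subset_union_left
  have hkpos : (0:ℝ) < 1/(k:ℝ) := by positivity
  have hPnn : 0 ≤ (1/(k:ℝ)) * P := mul_nonneg hkpos.le hPrB.le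
  calc (1/(k:ℝ)) * (f Sstar - f T) * P
      ≤ (∑ i ∈ Sstar, (f (insert i T) - f T)) * ((1/(k:ℝ)) * P) := by nlinarith
    _ = ∑ i ∈ Sstar, (f (insert i T) - f T) * ((1/(k:ℝ)) * P) := Finset.sum_mul _ _ _
    _ ≤ _ := key
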